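/- Let σ > 0, θ(r) = (σ²/2 + √(σ⁴/4 + 2σ² r))/σ², K > 0, γ > 1, and let F, G be probability distributions on (0,∞) with h_F(t) ≥ h_G(t) for all t ≥ 0. Define x_F*(q) = (∫θ(r)dF(r) / ∫((θ(r)-1)/r)dF(r)) · (γ/(γ-1)) q^{1/γ} K and similarly x_G*(q). Then x_F*(q) ≤ x_G*(q) for every q > 0, assuming all the integrals are finite and positive. -/

import Mathlib

open Real MeasureTheory Set

/-- The positive root `θ(r)` of `(1/2)σ²θ² - (1/2)σ²θ - r = 0`. -/
noncomputable def θfun (σ r : ℝ) : ℝ :=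
  (σ^2 / 2 + Real.sqrt (σ^4 / 4 + 2 * σ^2 * r)) / σ^2

/-- The discount function induced by the weighting distribution `F`. -/
noncomputable def discount (F : Measure ℝ) (t : ℝ) : ℝ := ∫ r, Real.exp (-r * t) ∂F

/-- The investment triggering boundary for weighting distribution `F`. -/
noncomputable def trigger (σ K γ : ℝ) (F : Measure ℝ) (q : ℝ) : ℝ :=
  ((∫ r, θfun σ r ∂F) / (∫ r, (θfun σ r - 1) / r ∂F)) * (γ / (γ - 1)) * q ^ (1/γ) * K

lemma ae_Ioi {μ : Measure ℝ} (h : μ (Ioi 0)ᶜ = 0) : ∀ᵐ r ∂μ, 0 < r := by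
  rw [ae_iff]
  have hset : {a : ℝ | ¬ 0 < a} = (Ioi (0:ℝ))ᶜ := by ext x; simp
  rw [hset]; exact h

lemma exp_fta (c x y : ℝ) (hc : c ≠ 0) :
    ∫ s in x..y, Real.exp (-(s*c)) = (Real.exp (-(x*c)) - Real.exp (-(y*c)))/c := by
  have hderiv : ∀ s ∈ Set.uIcc x y,
      HasDerivAt (fun s => -(Real.exp (-(s*c))/c)) (Real.exp (-(s*c))) s := by
    intro s _
    have h1 : HasDerivAt (fun s : ℝ => -(s*c)) (-c) s := by
      exact (((hasDerivAt_id s).mul_const c).neg).congr_deriv (by ring)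
    have h2 := (h1.exp.div_const c).neg
    exact h2.congr_deriv (by field_simp)
  rw [intervalIntegral.integral_eq_sub_of_hasDerivAt hderiv
    ((Continuous.intervalIntegrable (by fun_prop) _ _))]
  ring

lemma K1 (s : ℝ) (hs : 0 < s) :
    ∫⁻ t in Ioi (0:ℝ), ENNReal.ofReal (t ^ (-(1/2) : ℝ) * Real.exp (-(s*t)))
      = ENNReal.ofReal (Real.sqrt π / Real.sqrt s) := by
  have hInt : IntegrableOn (fun t : ℝ => t ^ (-(1/2):ℝ) * Real.exp (-(s*t))) (Ioi 0) := by
    have h := integrableOn_rpow_mul_exp_neg_mul_rpow (p := 1) (s := -(1/2)) (b := s)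
      (by norm_num) (by norm_num) hs
    refine h.congr_fun (fun t ht => ?_) measurableSet_Ioi
    beta_reduce
    rw [Real.rpow_one, neg_mul]
  rw [← ofReal_integral_eq_lintegral_ofReal hInt ?nn]
  case nn =>
    filter_upwards [ae_restrict_mem measurableSet_Ioi] with t ht
    have : (0:ℝ) < t := ht
    positivity
  congr 1
  have h := Real.integral_rpow_mul_exp_neg_mul_Ioi (a := 1/2) (r := s) (by norm_num) hs
  rw [show (-(1/2):ℝ) = 1/2 - 1 by norm_num, h, Real.Gamma_one_half_eq,
    ← Real.sqrt_eq_rpow, one_div, Real.sqrt_inv]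
  field_simp

lemma K2 (a b : ℝ) (ha : 0 < a) (hab : a ≤ b) :
    ∫⁻ t in Ioi (0:ℝ),
        ENNReal.ofReal (t ^ (-(3/2) : ℝ) * (Real.exp (-(a*t)) - Real.exp (-(b*t))))
      = ENNReal.ofReal (2 * Real.sqrt π * (Real.sqrt b - Real.sqrt a)) := by
  -- Step 1: pointwise identity on Ioi 0
  have step1 : ∀ t ∈ Ioi (0:ℝ),
      ENNReal.ofReal (t ^ (-(3/2) : ℝ) * (Real.exp (-(a*t)) - Real.exp (-(b*t))))
        = ∫⁻ s in Ioc a b, ENNReal.ofReal (t ^ (-(1/2) : ℝ) * Real.exp (-(s*t))) := by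
    intro t ht
    have ht' : (0:ℝ) < t := ht
    have hfta := exp_fta t a b (ne_of_gt ht')
    have hval : t ^ (-(3/2) : ℝ) * (Real.exp (-(a*t)) - Real.exp (-(b*t)))
        = ∫ s in Ioc a b, t ^ (-(1/2) : ℝ) * Real.exp (-(s*t)) := by
      rw [← intervalIntegral.integral_of_le hab, intervalIntegral.integral_const_mul, hfta]
      rw [show t ^ (-(3/2):ℝ) = t ^ (-(1/2):ℝ) / t by
        rw [eq_div_iff (ne_of_gt ht')]
        nth_rewrite 2 [show t = t ^ (1:ℝ) by rw [Real.rpow_one]]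
        rw [← Real.rpow_add ht']
        norm_num]
      ring
    rw [hval, ofReal_integral_eq_lintegral_ofReal]
    · exact (Continuous.integrableOn_Ioc (by fun_prop))
    · filter_upwards [ae_restrict_mem measurableSet_Ioc] with s hs
      positivity
  rw [setLIntegral_congr_fun measurableSet_Ioi step1]
  -- Step 2: swap
  rw [lintegral_lintegral_swap]
  · -- Step 3: inner integral via K1
    have step3 : ∀ s ∈ Ioc a b,
        (∫⁻ t in Ioi (0:ℝ), ENNReal.ofReal (t ^ (-(1/2) : ℝ) * Real.exp (-(s*t))))
          = ENNReal.ofReal (Real.sqrt π * s ^ (-(1/2):ℝ)) := by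
      intro s hs
      have hs' : 0 < s := lt_of_lt_of_le ha hs.1.le
      rw [K1 s hs']
      congr 1
      rw [Real.sqrt_eq_rpow s, Real.rpow_neg hs'.le, div_eq_mul_inv]
    rw [setLIntegral_congr_fun measurableSet_Ioc step3]
    rw [← ofReal_integral_eq_lintegral_ofReal]
    · congr 1
      rw [← intervalIntegral.integral_of_le hab, intervalIntegral.integral_const_mul,
        integral_rpow (Or.inl (by norm_num))]
      rw [Real.sqrt_eq_rpow b, Real.sqrt_eq_rpow a]
      norm_num
      ring
    · -- integrability of s ↦ √π * s^(-1/2) on Ioc a b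
      refine (ContinuousOn.integrableOn_compact isCompact_Icc ?_).mono_set Ioc_subset_Icc_self
      refine continuousOn_const.mul (ContinuousOn.rpow_const continuousOn_id ?_)
      intro s hs
      exact Or.inl (ne_of_gt (lt_of_lt_of_le ha hs.1))
    · filter_upwards [ae_restrict_mem measurableSet_Ioc] with s hs
      have hs' : 0 < s := lt_of_lt_of_le ha hs.1.le
      positivity
  · apply Measurable.aemeasurable
    fun_prop


lemma integ_exp (μ : Measure ℝ) [IsProbabilityMeasure μ] (hμc : μ (Ioi 0)ᶜ = 0) {u : ℝ}
    (hu : 0 ≤ u) : Integrable (fun r => Real.exp (-(r*u))) μ := by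
  refine Integrable.mono' (integrable_const 1)
    (Continuous.aestronglyMeasurable (by fun_prop)) ?_
  filter_upwards [ae_Ioi hμc] with r hr
  rw [Real.norm_eq_abs, abs_of_pos (Real.exp_pos _)]
  exact Real.exp_le_one_iff.2 (by nlinarith)

lemma repr3 (μ : Measure ℝ) [IsProbabilityMeasure μ] (hμc : μ (Ioi 0)ᶜ = 0) (t : ℝ)
    (ht : 0 < t) :
    ∫⁻ r, ENNReal.ofReal ((1 - Real.exp (-(2*r*t)))/r) ∂μ
      = ∫⁻ u in Ioc (0:ℝ) (2*t), ENNReal.ofReal (discount μ u) := by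
  have hae := ae_Ioi hμc
  have step : ∀ᵐ r ∂μ, ENNReal.ofReal ((1 - Real.exp (-(2*r*t)))/r)
      = ∫⁻ u in Ioc (0:ℝ) (2*t), ENNReal.ofReal (Real.exp (-(r*u))) := by
    filter_upwards [hae] with r hr
    have h1 : (1 - Real.exp (-(2*r*t)))/r = ∫ u in Ioc (0:ℝ) (2*t), Real.exp (-(r*u)) := by
      have h2 : ∀ u : ℝ, Real.exp (-(r*u)) = Real.exp (-(u*r)) := by
        intro u; ring_nf
      simp_rw [h2]
      rw [← intervalIntegral.integral_of_le (by linarith), exp_fta r 0 (2*t) (ne_of_gt hr)]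
      norm_num
      ring_nf
    rw [h1, ofReal_integral_eq_lintegral_ofReal]
    · exact Continuous.integrableOn_Ioc (by fun_prop)
    · exact ae_of_all _ (fun u => (Real.exp_pos _).le)
  rw [lintegral_congr_ae step, lintegral_lintegral_swap (Measurable.aemeasurable (by fun_prop))]
  refine setLIntegral_congr_fun measurableSet_Ioc ?_
  intro u hu
  beta_reduce
  rw [← ofReal_integral_eq_lintegral_ofReal (integ_exp μ hμc hu.1.le)
    (ae_of_all _ (fun r => (Real.exp_pos _).le))]
  congr 1
  unfold discount
  congr 1
  ext r
  ring_nf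

lemma repr1 (a : ℝ) (ha : 0 < a) (μ : Measure ℝ) [IsProbabilityMeasure μ]
    (hμc : μ (Ioi 0)ᶜ = 0)
    (hint : Integrable (fun r => Real.sqrt (a + 2*r) - Real.sqrt a) μ) :
    ENNReal.ofReal (2 * Real.sqrt π * ∫ r, (Real.sqrt (a + 2*r) - Real.sqrt a) ∂μ)
      = ∫⁻ t in Ioi (0:ℝ),
          ENNReal.ofReal (t ^ (-(3/2):ℝ) * Real.exp (-(a*t)) * (1 - discount μ (2*t))) := by
  have hae := ae_Ioi hμc
  rw [← integral_const_mul, ofReal_integral_eq_lintegral_ofReal (hint.const_mul _) ?nn1]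
  case nn1 =>
    filter_upwards [hae] with r hr
    have h1 : Real.sqrt a ≤ Real.sqrt (a + 2*r) := Real.sqrt_le_sqrt (by linarith)
    have h2 : (0:ℝ) ≤ 2 * Real.sqrt π := by positivity
    simp only [Pi.zero_apply]
    nlinarith
  have step : ∀ᵐ r ∂μ, ENNReal.ofReal (2 * Real.sqrt π * (Real.sqrt (a + 2*r) - Real.sqrt a))
      = ∫⁻ t in Ioi (0:ℝ),
          ENNReal.ofReal (t ^ (-(3/2):ℝ) * (Real.exp (-(a*t)) - Real.exp (-((a+2*r)*t)))) := by
    filter_upwards [hae] with r hr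
    exact (K2 a (a+2*r) ha (by linarith)).symm
  rw [lintegral_congr_ae step, lintegral_lintegral_swap (Measurable.aemeasurable (by fun_prop))]
  refine setLIntegral_congr_fun measurableSet_Ioi ?_
  intro t ht
  beta_reduce
  have ht' : (0:ℝ) < t := ht
  have hkey : ∀ r : ℝ, Real.exp (-((a+2*r)*t)) = Real.exp (-(a*t)) * Real.exp (-(r*(2*t))) := by
    intro r; rw [← Real.exp_add]; ring_nf
  have hexp : Integrable (fun r => Real.exp (-(r*(2*t)))) μ := integ_exp μ hμc (by linarith)
  have hInt2 : Integrable
      (fun r => t ^ (-(3/2):ℝ) * (Real.exp (-(a*t)) - Real.exp (-((a+2*r)*t)))) μ := by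
    have hbase : Integrable (fun r => t ^ (-(3/2):ℝ)
        * (Real.exp (-(a*t)) - Real.exp (-(a*t)) * Real.exp (-(r*(2*t))))) μ :=
      ((integrable_const _).sub (hexp.const_mul _)).const_mul _
    refine hbase.congr (Filter.Eventually.of_forall fun r => ?_)
    simp only [hkey r]
  rw [← ofReal_integral_eq_lintegral_ofReal hInt2 ?nn2]
  case nn2 =>
    filter_upwards [hae] with r hr
    have h1 : Real.exp (-((a+2*r)*t)) ≤ Real.exp (-(a*t)) :=
      Real.exp_le_exp.2 (by nlinarith)
    have h2 : (0:ℝ) ≤ t ^ (-(3/2):ℝ) := Real.rpow_nonneg ht'.le _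
    simp only [Pi.zero_apply]
    nlinarith
  congr 1
  rw [integral_const_mul]
  have hsub : ∫ r, (Real.exp (-(a*t)) - Real.exp (-((a+2*r)*t))) ∂μ
      = Real.exp (-(a*t)) - Real.exp (-(a*t)) * ∫ r, Real.exp (-(r*(2*t))) ∂μ := by
    simp_rw [hkey]
    rw [integral_sub (integrable_const _) (hexp.const_mul _), integral_const, probReal_univ,
      integral_const_mul]
    simp
  rw [hsub]
  have hdisc : discount μ (2*t) = ∫ r, Real.exp (-(r*(2*t))) ∂μ := by
    unfold discount
    congr 1
    ext r
    ring_nf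
  rw [← hdisc]
  ring

lemma repr2 (a : ℝ) (ha : 0 < a) (μ : Measure ℝ) [IsProbabilityMeasure μ]
    (hμc : μ (Ioi 0)ᶜ = 0)
    (hint : Integrable (fun r => (Real.sqrt (a + 2*r) - Real.sqrt a)/r) μ) :
    ENNReal.ofReal (2 * Real.sqrt π * ∫ r, (Real.sqrt (a + 2*r) - Real.sqrt a)/r ∂μ)
      = ∫⁻ t in Ioi (0:ℝ), ENNReal.ofReal (t ^ (-(3/2):ℝ) * Real.exp (-(a*t)))
          * ∫⁻ r, ENNReal.ofReal ((1 - Real.exp (-(2*r*t)))/r) ∂μ := by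
  have hae := ae_Ioi hμc
  rw [← integral_const_mul, ofReal_integral_eq_lintegral_ofReal (hint.const_mul _) ?nn1]
  case nn1 =>
    filter_upwards [hae] with r hr
    have h1 : Real.sqrt a ≤ Real.sqrt (a + 2*r) := Real.sqrt_le_sqrt (by linarith)
    have h2 : (0:ℝ) ≤ 2 * Real.sqrt π := by positivity
    have h3 : (0:ℝ) ≤ (Real.sqrt (a + 2*r) - Real.sqrt a)/r := by
      apply div_nonneg (by linarith) hr.le
    simp only [Pi.zero_apply]
    nlinarith
  have step : ∀ᵐ r ∂μ, ENNReal.ofReal (2 * Real.sqrt π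
        * ((Real.sqrt (a + 2*r) - Real.sqrt a)/r))
      = ∫⁻ t in Ioi (0:ℝ),
          ENNReal.ofReal (r⁻¹ * (t ^ (-(3/2):ℝ)
            * (Real.exp (-(a*t)) - Real.exp (-((a+2*r)*t))))) := by
    filter_upwards [hae] with r hr
    have h0 : (0:ℝ) ≤ r⁻¹ := by positivity
    calc ENNReal.ofReal (2 * Real.sqrt π * ((Real.sqrt (a + 2*r) - Real.sqrt a)/r))
        = ENNReal.ofReal (r⁻¹ * (2 * Real.sqrt π * (Real.sqrt (a + 2*r) - Real.sqrt a))) := by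
          congr 1; field_simp
      _ = ENNReal.ofReal r⁻¹
            * ENNReal.ofReal (2 * Real.sqrt π * (Real.sqrt (a + 2*r) - Real.sqrt a)) :=
          ENNReal.ofReal_mul h0
      _ = ENNReal.ofReal r⁻¹ * ∫⁻ t in Ioi (0:ℝ),
            ENNReal.ofReal (t ^ (-(3/2):ℝ)
              * (Real.exp (-(a*t)) - Real.exp (-((a+2*r)*t)))) := by
          rw [K2 a (a+2*r) ha (by linarith)]
      _ = ∫⁻ t in Ioi (0:ℝ), ENNReal.ofReal r⁻¹
            * ENNReal.ofReal (t ^ (-(3/2):ℝ)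
              * (Real.exp (-(a*t)) - Real.exp (-((a+2*r)*t)))) :=
          (lintegral_const_mul' _ _ ENNReal.ofReal_ne_top).symm
      _ = _ := by
          refine lintegral_congr (fun t => ?_)
          rw [← ENNReal.ofReal_mul h0]
  rw [lintegral_congr_ae step, lintegral_lintegral_swap (Measurable.aemeasurable (by fun_prop))]
  refine setLIntegral_congr_fun measurableSet_Ioi ?_
  intro t ht
  beta_reduce
  have ht' : (0:ℝ) < t := ht
  rw [← lintegral_const_mul' _ _ ENNReal.ofReal_ne_top]
  refine lintegral_congr_ae ?_
  filter_upwards [hae] with r hr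
  have hT : (0:ℝ) ≤ t ^ (-(3/2):ℝ) * Real.exp (-(a*t)) := by positivity
  rw [← ENNReal.ofReal_mul hT]
  congr 1
  have hkey : Real.exp (-((a+2*r)*t)) = Real.exp (-(a*t)) * Real.exp (-(2*r*t)) := by
    rw [← Real.exp_add]; ring_nf
  rw [hkey]
  field_simp

lemma cmp1 (a : ℝ) (ha : 0 < a) (F G : Measure ℝ)
    [IsProbabilityMeasure F] [IsProbabilityMeasure G]
    (hFc : F (Ioi (0:ℝ))ᶜ = 0) (hGc : G (Ioi (0:ℝ))ᶜ = 0)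
    (hdom : ∀ t : ℝ, 0 ≤ t → discount F t ≥ discount G t)
    (hintF : Integrable (fun r => Real.sqrt (a + 2*r) - Real.sqrt a) F)
    (hintG : Integrable (fun r => Real.sqrt (a + 2*r) - Real.sqrt a) G) :
    ∫ r, (Real.sqrt (a + 2*r) - Real.sqrt a) ∂F
      ≤ ∫ r, (Real.sqrt (a + 2*r) - Real.sqrt a) ∂G := by
  have hF := repr1 a ha F hFc hintF
  have hG := repr1 a ha G hGc hintG
  have hmono : (∫⁻ t in Ioi (0:ℝ),
        ENNReal.ofReal (t ^ (-(3/2):ℝ) * Real.exp (-(a*t)) * (1 - discount F (2*t))))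
      ≤ ∫⁻ t in Ioi (0:ℝ),
        ENNReal.ofReal (t ^ (-(3/2):ℝ) * Real.exp (-(a*t)) * (1 - discount G (2*t))) := by
    refine lintegral_mono_ae ?_
    filter_upwards [ae_restrict_mem measurableSet_Ioi] with t ht
    have ht' : (0:ℝ) < t := ht
    apply ENNReal.ofReal_le_ofReal
    have h1 : discount G (2*t) ≤ discount F (2*t) := hdom (2*t) (by linarith)
    have h2 : (0:ℝ) ≤ t ^ (-(3/2):ℝ) * Real.exp (-(a*t)) := by positivity
    exact mul_le_mul_of_nonneg_left (by linarith) h2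
  rw [← hF, ← hG] at hmono
  have hnn : (0:ℝ) ≤ 2 * Real.sqrt π * ∫ r, (Real.sqrt (a + 2*r) - Real.sqrt a) ∂G := by
    refine mul_nonneg (by positivity) (integral_nonneg_of_ae ?_)
    filter_upwards [ae_Ioi hGc] with r hr
    have : Real.sqrt a ≤ Real.sqrt (a + 2*r) := Real.sqrt_le_sqrt (by linarith)
    simp only [Pi.zero_apply]
    linarith
  rw [ENNReal.ofReal_le_ofReal_iff hnn] at hmono
  have hpos : (0:ℝ) < 2 * Real.sqrt π := by positivity
  exact le_of_mul_le_mul_left hmono hpos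

lemma cmp2 (a : ℝ) (ha : 0 < a) (F G : Measure ℝ)
    [IsProbabilityMeasure F] [IsProbabilityMeasure G]
    (hFc : F (Ioi (0:ℝ))ᶜ = 0) (hGc : G (Ioi (0:ℝ))ᶜ = 0)
    (hdom : ∀ t : ℝ, 0 ≤ t → discount F t ≥ discount G t)
    (hintF : Integrable (fun r => (Real.sqrt (a + 2*r) - Real.sqrt a)/r) F)
    (hintG : Integrable (fun r => (Real.sqrt (a + 2*r) - Real.sqrt a)/r) G) :
    ∫ r, (Real.sqrt (a + 2*r) - Real.sqrt a)/r ∂G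
      ≤ ∫ r, (Real.sqrt (a + 2*r) - Real.sqrt a)/r ∂F := by
  have hF := repr2 a ha F hFc hintF
  have hG := repr2 a ha G hGc hintG
  have hmono : (∫⁻ t in Ioi (0:ℝ), ENNReal.ofReal (t ^ (-(3/2):ℝ) * Real.exp (-(a*t)))
        * ∫⁻ r, ENNReal.ofReal ((1 - Real.exp (-(2*r*t)))/r) ∂G)
      ≤ ∫⁻ t in Ioi (0:ℝ), ENNReal.ofReal (t ^ (-(3/2):ℝ) * Real.exp (-(a*t)))
        * ∫⁻ r, ENNReal.ofReal ((1 - Real.exp (-(2*r*t)))/r) ∂F := by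
    refine lintegral_mono_ae ?_
    filter_upwards [ae_restrict_mem measurableSet_Ioi] with t ht
    have ht' : (0:ℝ) < t := ht
    refine mul_le_mul_right ?_ _
    rw [repr3 F hFc t ht', repr3 G hGc t ht']
    refine lintegral_mono_ae ?_
    filter_upwards [ae_restrict_mem measurableSet_Ioc] with u hu
    exact ENNReal.ofReal_le_ofReal (hdom u hu.1.le)
  rw [← hF, ← hG] at hmono
  have hnn : (0:ℝ) ≤ 2 * Real.sqrt π * ∫ r, (Real.sqrt (a + 2*r) - Real.sqrt a)/r ∂F := by
    refine mul_nonneg (by positivity) (integral_nonneg_of_ae ?_)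
    filter_upwards [ae_Ioi hFc] with r hr
    have : Real.sqrt a ≤ Real.sqrt (a + 2*r) := Real.sqrt_le_sqrt (by linarith)
    simp only [Pi.zero_apply]
    exact div_nonneg (by linarith) hr.le
  rw [ENNReal.ofReal_le_ofReal_iff hnn] at hmono
  have hpos : (0:ℝ) < 2 * Real.sqrt π := by positivity
  exact le_of_mul_le_mul_left hmono hpos


lemma theta_eq (σ : ℝ) (hσ : 0 < σ) (r : ℝ) (hr : 0 < r) :
    θfun σ r = 1 + (Real.sqrt (σ^2/4 + 2*r) - Real.sqrt (σ^2/4))/σ := by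
  unfold θfun
  have h1 : σ^4/4 + 2*σ^2*r = σ^2 * (σ^2/4 + 2*r) := by ring
  rw [h1, Real.sqrt_mul (sq_nonneg σ), Real.sqrt_sq hσ.le]
  have h2 : Real.sqrt (σ^2/4) = σ/2 := by
    rw [show σ^2/4 = (σ/2)^2 by ring, Real.sqrt_sq (by linarith)]
  rw [h2]
  field_simp
  ring

theorem stmt13 (σ K γ : ℝ) (hσ : 0 < σ) (hK : 0 < K) (hγ : 1 < γ)
    (F G : Measure ℝ) [IsProbabilityMeasure F] [IsProbabilityMeasure G]
    (hFc : F (Ioi (0:ℝ))ᶜ = 0) (hGc : G (Ioi (0:ℝ))ᶜ = 0)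
    (hdom : ∀ t : ℝ, 0 ≤ t → discount F t ≥ discount G t)
    (hIntF1 : Integrable (θfun σ) F) (hIntG1 : Integrable (θfun σ) G)
    (hIntF2 : Integrable (fun r => (θfun σ r - 1) / r) F)
    (hIntG2 : Integrable (fun r => (θfun σ r - 1) / r) G)
    (hposF1 : 0 < ∫ r, θfun σ r ∂F) (hposG1 : 0 < ∫ r, θfun σ r ∂G)
    (hposF2 : 0 < ∫ r, (θfun σ r - 1) / r ∂F)
    (hposG2 : 0 < ∫ r, (θfun σ r - 1) / r ∂G) :
    ∀ q : ℝ, 0 < q → trigger σ K γ F q ≤ trigger σ K γ G q := by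
  intro q hq
  have ha : (0:ℝ) < σ^2/4 := by positivity
  -- a.e. rewriting of θfun
  have hθF : ∀ᵐ r ∂F, θfun σ r = 1 + (Real.sqrt (σ^2/4 + 2*r) - Real.sqrt (σ^2/4))/σ := by
    filter_upwards [ae_Ioi hFc] with r hr using theta_eq σ hσ r hr
  have hθG : ∀ᵐ r ∂G, θfun σ r = 1 + (Real.sqrt (σ^2/4 + 2*r) - Real.sqrt (σ^2/4))/σ := by
    filter_upwards [ae_Ioi hGc] with r hr using theta_eq σ hσ r hr
  have hθ2F : ∀ᵐ r ∂F, (θfun σ r - 1)/r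
      = ((Real.sqrt (σ^2/4 + 2*r) - Real.sqrt (σ^2/4))/r)/σ := by
    filter_upwards [ae_Ioi hFc] with r hr
    rw [theta_eq σ hσ r hr, add_sub_cancel_left, div_right_comm]
  have hθ2G : ∀ᵐ r ∂G, (θfun σ r - 1)/r
      = ((Real.sqrt (σ^2/4 + 2*r) - Real.sqrt (σ^2/4))/r)/σ := by
    filter_upwards [ae_Ioi hGc] with r hr
    rw [theta_eq σ hσ r hr, add_sub_cancel_left, div_right_comm]
  -- integrability
  have hintF : Integrable (fun r => Real.sqrt (σ^2/4 + 2*r) - Real.sqrt (σ^2/4)) F := by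
    have hbase : Integrable (fun r => σ * (θfun σ r - 1)) F :=
      (hIntF1.sub (integrable_const 1)).const_mul σ
    refine hbase.congr ?_
    filter_upwards [hθF] with r hr
    rw [hr, add_sub_cancel_left, mul_div_cancel₀ _ hσ.ne']
  have hintG : Integrable (fun r => Real.sqrt (σ^2/4 + 2*r) - Real.sqrt (σ^2/4)) G := by
    have hbase : Integrable (fun r => σ * (θfun σ r - 1)) G :=
      (hIntG1.sub (integrable_const 1)).const_mul σ
    refine hbase.congr ?_
    filter_upwards [hθG] with r hr
    rw [hr, add_sub_cancel_left, mul_div_cancel₀ _ hσ.ne']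
  have hint2F : Integrable (fun r => (Real.sqrt (σ^2/4 + 2*r) - Real.sqrt (σ^2/4))/r) F := by
    have hbase : Integrable (fun r => σ * ((θfun σ r - 1)/r)) F := hIntF2.const_mul σ
    refine hbase.congr ?_
    filter_upwards [hθ2F] with r hr
    rw [hr, mul_div_cancel₀ _ hσ.ne']
  have hint2G : Integrable (fun r => (Real.sqrt (σ^2/4 + 2*r) - Real.sqrt (σ^2/4))/r) G := by
    have hbase : Integrable (fun r => σ * ((θfun σ r - 1)/r)) G := hIntG2.const_mul σ
    refine hbase.congr ?_
    filter_upwards [hθ2G] with r hr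
    rw [hr, mul_div_cancel₀ _ hσ.ne']
  -- expressing the integrals
  have hAF : ∫ r, θfun σ r ∂F
      = 1 + (∫ r, (Real.sqrt (σ^2/4 + 2*r) - Real.sqrt (σ^2/4)) ∂F)/σ := by
    rw [integral_congr_ae hθF, integral_add (integrable_const 1) (hintF.div_const σ),
      integral_const, probReal_univ, integral_div]
    simp
  have hAG : ∫ r, θfun σ r ∂G
      = 1 + (∫ r, (Real.sqrt (σ^2/4 + 2*r) - Real.sqrt (σ^2/4)) ∂G)/σ := by
    rw [integral_congr_ae hθG, integral_add (integrable_const 1) (hintG.div_const σ),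
      integral_const, probReal_univ, integral_div]
    simp
  have hBF : ∫ r, (θfun σ r - 1)/r ∂F
      = (∫ r, (Real.sqrt (σ^2/4 + 2*r) - Real.sqrt (σ^2/4))/r ∂F)/σ := by
    rw [integral_congr_ae hθ2F, integral_div]
  have hBG : ∫ r, (θfun σ r - 1)/r ∂G
      = (∫ r, (Real.sqrt (σ^2/4 + 2*r) - Real.sqrt (σ^2/4))/r ∂G)/σ := by
    rw [integral_congr_ae hθ2G, integral_div]
  -- the comparisons
  have hIcmp := cmp1 (σ^2/4) ha F G hFc hGc hdom hintF hintG
  have hJcmp := cmp2 (σ^2/4) ha F G hFc hGc hdom hint2F hint2G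
  have hA : ∫ r, θfun σ r ∂F ≤ ∫ r, θfun σ r ∂G := by
    rw [hAF, hAG]
    gcongr
  have hB : ∫ r, (θfun σ r - 1)/r ∂G ≤ ∫ r, (θfun σ r - 1)/r ∂F := by
    rw [hBF, hBG]
    gcongr
  have hdiv : (∫ r, θfun σ r ∂F) / (∫ r, (θfun σ r - 1)/r ∂F)
      ≤ (∫ r, θfun σ r ∂G) / (∫ r, (θfun σ r - 1)/r ∂G) :=
    div_le_div₀ hposG1.le hA hposG2 hB
  have c1 : (0:ℝ) ≤ γ/(γ-1) := div_nonneg (by linarith) (by linarith)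
  have c2 : (0:ℝ) ≤ q ^ (1/γ) := Real.rpow_nonneg hq.le _
  unfold trigger
  exact mul_le_mul_of_nonneg_right
    (mul_le_mul_of_nonneg_right (mul_le_mul_of_nonneg_right hdiv c1) c2) hK.le
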